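/- Let F be a field of characteristic 2, let m ≥ 3, and let Q be a finite group whose Sylow 2-subgroup is isomorphic to the semi-dihedral group of order 2^{m+1}, namely the group presented with generators x, y and relations x^2 = 1, y^{2^m} = 1, x⁻¹ y x = y^{2^{m-1}-1}. Then for every finite-dimensional F-linear representation M of Q, dim_F H^2(Q, M) ≤ 3 · dim_F M. -/

import Mathlib

/-- The defining relations of the semi-dihedral group of order `2^(m+1)`:
generators `x = of 0`, `y = of 1`, with relations `x^2 = 1`, `y^(2^m) = 1`, and
`x⁻¹ * y * x = y^(2^(m-1) - 1)`. -/
def semidihedralRels (m : ℕ) : Set (FreeGroup (Fin 2)) :=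
  { FreeGroup.of 0 ^ 2,
    FreeGroup.of 1 ^ (2 ^ m),
    (FreeGroup.of 0)⁻¹ * FreeGroup.of 1 * FreeGroup.of 0 *
      (FreeGroup.of 1 ^ (2 ^ (m - 1) - 1))⁻¹ }

/-- The semi-dihedral group of order `2^(m+1)`, presented as
`⟨x, y ∣ x^2 = y^(2^m) = 1, x⁻¹ y x = y^(2^(m-1) - 1)⟩`. -/
def SemidihedralGroup (m : ℕ) : Type := PresentedGroup (semidihedralRels m)

instance (m : ℕ) : Group (SemidihedralGroup m) :=
  inferInstanceAs (Group (PresentedGroup (semidihedralRels m)))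

open groupCohomology

section TwistedExtension

variable {k G : Type} [CommRing k] [Group G] {A : Rep k G}

/-- The carrier of the extension of `G` by `A` determined by a 2-cocycle `f`. -/
def CExt (A : Rep k G) (_f : cocycles₂ A) : Type := A × G

namespace CExt

variable (f : cocycles₂ A)

noncomputable instance : Mul (CExt A f) :=
  ⟨fun u v => (u.1 + A.ρ u.2 v.1 + f.1 (u.2, v.2), u.2 * v.2)⟩

noncomputable instance : One (CExt A f) := ⟨(-f.1 (1, 1), 1)⟩

noncomputable instance : Inv (CExt A f) :=
  ⟨fun u => (-f.1 (1, 1) - f.1 (u.2⁻¹, u.2) - A.ρ u.2⁻¹ u.1, u.2⁻¹)⟩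

lemma mul_fst (u v : CExt A f) : (u * v).1 = u.1 + A.ρ u.2 v.1 + f.1 (u.2, v.2) := rfl
lemma mul_snd (u v : CExt A f) : (u * v).2 = u.2 * v.2 := rfl
lemma one_fst : (1 : CExt A f).1 = -f.1 (1, 1) := rfl
lemma one_snd : (1 : CExt A f).2 = 1 := rfl
lemma inv_fst (u : CExt A f) :
    (u⁻¹).1 = -f.1 (1, 1) - f.1 (u.2⁻¹, u.2) - A.ρ u.2⁻¹ u.1 := rfl
lemma inv_snd (u : CExt A f) : (u⁻¹).2 = u.2⁻¹ := rfl

lemma coe_map_one_fst (f : cocycles₂ A) (g : G) : f.1 (1, g) = f.1 (1, 1) :=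
  cocycles₂_map_one_fst f g

lemma ext {f : cocycles₂ A} {u v : CExt A f} (h1 : u.1 = v.1) (h2 : u.2 = v.2) : u = v := by
  obtain ⟨a, b⟩ := u; obtain ⟨c, d⟩ := v
  simp only at h1 h2; subst h1; subst h2; rfl

noncomputable instance : Group (CExt A f) := by
  refine Group.ofLeftAxioms ?_ ?_ ?_
  · intro u v w
    refine ext (f := f) ?_ ?_
    · have hc := (mem_cocycles₂_iff f.1).1 f.2 u.2 v.2 w.2
      simp only [mul_fst, mul_snd, map_add, map_mul, Module.End.mul_apply]
      rw [eq_sub_of_add_eq hc]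
      abel
    · simp only [mul_snd, mul_assoc]
  · intro u
    refine ext (f := f) ?_ ?_
    · rw [mul_fst, one_fst, one_snd, map_one]
      simp only [Module.End.one_apply, coe_map_one_fst]
      abel
    · simp only [mul_snd, one_snd, one_mul]
  · intro u
    refine ext (f := f) ?_ ?_
    · rw [mul_fst, inv_fst, inv_snd, one_fst]
      abel
    · simp only [mul_snd, inv_snd, one_snd, inv_mul_cancel]

/-- Projection onto `G`. -/
noncomputable def π : CExt A f →* G where
  toFun := Prod.snd
  map_one' := rfl
  map_mul' _ _ := rfl

lemma π_apply (u : CExt A f) : π f u = u.2 := rfl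

end CExt

end TwistedExtension

section WordEval

variable {k G : Type} [CommRing k] [Group G] {A : Rep k G}
variable {α : Type} (g₀ : α → G)

/-- Lift of the free group to the twisted extension, sending generators to `(0, g₀ i)`. -/
noncomputable def CExt.lifted (f : cocycles₂ A) : FreeGroup α →* CExt A f :=
  FreeGroup.lift fun i => (((0 : A), g₀ i) : CExt A f)

lemma CExt.lifted_of (f : cocycles₂ A) (i : α) :
    CExt.lifted g₀ f (FreeGroup.of i) = (((0 : A), g₀ i) : CExt A f) :=
  FreeGroup.lift_apply_of

lemma CExt.lifted_snd (f : cocycles₂ A) (w : FreeGroup α) :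
    (CExt.lifted g₀ f w).2 = FreeGroup.lift g₀ w := by
  have h : (CExt.π f).comp (CExt.lifted g₀ f) = FreeGroup.lift g₀ :=
    FreeGroup.ext_hom _ _ fun i => by
      simp [CExt.lifted_of, CExt.π_apply, FreeGroup.lift_apply_of]
      rfl
  exact DFunLike.congr_fun h w

lemma CExt.lifted_fst_add (f f' : cocycles₂ A) (w : FreeGroup α) :
    (CExt.lifted g₀ (f + f') w).1 = (CExt.lifted g₀ f w).1 + (CExt.lifted g₀ f' w).1 := by
  have hp : ∀ i : α, (pure i : FreeGroup α) = FreeGroup.of i := fun _ => rfl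
  induction w using FreeGroup.induction_on with
  | C1 =>
    simp only [map_one, CExt.one_fst, Submodule.coe_add, Pi.add_apply]
    abel
  | of i =>
    simp only [hp, CExt.lifted_of]
    abel
  | inv_of i _ =>
    rw [map_inv, map_inv, map_inv,
      CExt.inv_fst, CExt.inv_fst, CExt.inv_fst]
    simp only [CExt.lifted_of, Submodule.coe_add, Pi.add_apply, map_zero]
    abel
  | mul w v ihw ihv =>
    rw [MonoidHom.map_mul, MonoidHom.map_mul, MonoidHom.map_mul, CExt.mul_fst, CExt.mul_fst,
      CExt.mul_fst, ihw, ihv]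
    simp only [CExt.lifted_snd, Submodule.coe_add, Pi.add_apply, map_add]
    abel

lemma CExt.lifted_fst_smul (c : k) (f : cocycles₂ A) (w : FreeGroup α) :
    (CExt.lifted g₀ (c • f) w).1 = c • (CExt.lifted g₀ f w).1 := by
  have hp : ∀ i : α, (pure i : FreeGroup α) = FreeGroup.of i := fun _ => rfl
  induction w using FreeGroup.induction_on with
  | C1 =>
    simp only [map_one, CExt.one_fst, Submodule.coe_smul, Pi.smul_apply, smul_neg]
  | of i =>
    simp only [hp, CExt.lifted_of, smul_zero]
  | inv_of i _ =>
    rw [map_inv, map_inv, CExt.inv_fst, CExt.inv_fst]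
    simp only [CExt.lifted_of, Submodule.coe_smul, Pi.smul_apply, map_zero, map_smul, smul_sub, smul_neg,
      smul_zero]
  | mul w v ihw ihv =>
    rw [MonoidHom.map_mul, MonoidHom.map_mul, CExt.mul_fst, CExt.mul_fst, ihw, ihv]
    simp only [CExt.lifted_snd, Submodule.coe_smul, Pi.smul_apply, map_smul, smul_add]

/-- Evaluation of a relator against a 2-cocycle, as a linear map. -/
noncomputable def relatorEval (r : FreeGroup α) : cocycles₂ A →ₗ[k] A where
  toFun f := (CExt.lifted g₀ f r).1 + f.1 (1, 1)
  map_add' f f' := by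
    simp only [CExt.lifted_fst_add, Submodule.coe_add, Pi.add_apply]
    abel
  map_smul' c f := by
    simp only [CExt.lifted_fst_smul, Submodule.coe_smul, Pi.smul_apply, RingHom.id_apply,
      smul_add]

lemma relatorEval_apply (r : FreeGroup α) (f : cocycles₂ A) :
    relatorEval g₀ r f = (CExt.lifted g₀ f r).1 + f.1 (1, 1) := rfl

end WordEval

section Gaschutz

variable {k G : Type} [CommRing k] [Group G] {A : Rep k G}

lemma mem_twoCoboundaries_of_monoidHom_section {P : Subgroup G} [Fintype (G ⧸ P)]
    (hcard : ((Fintype.card (G ⧸ P) : k) = 1))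
    (f : cocycles₂ A) (s : ↥P →* CExt A f)
    (hs : ∀ p : ↥P, (s p).2 = (p : G)) :
    f.1 ∈ coboundaries₂ A := by
  classical
  set τ : G ⧸ P → G := Quotient.out with hτdef
  have hmem : ∀ (g : G) (c : G ⧸ P), (τ (g • c))⁻¹ * (g * τ c) ∈ P := by
    intro g c
    rw [← QuotientGroup.eq, QuotientGroup.out_eq', ← smul_eq_mul]
    exact (MulAction.Quotient.coe_smul_out (H := P) g c).symm
  set ρP : G → G ⧸ P → ↥P := fun g c => ⟨(τ (g • c))⁻¹ * (g * τ c), hmem g c⟩ with hρP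
  set σ : G → CExt A f := fun q => (((0 : A), q) : CExt A f) with hσ
  set t : G → G ⧸ P → CExt A f := fun g c => σ (τ (g • c)) * s (ρP g c) * (σ (τ c))⁻¹ with ht
  have hσsnd : ∀ q : G, (σ q).2 = q := fun q => rfl
  have hsnd : ∀ g c, (t g c).2 = g := by
    intro g c
    simp only [ht, CExt.mul_snd, CExt.inv_snd, hσsnd, hs, hρP]
    group
  have hcoc : ∀ g h c, t (g * h) c = t g (h • c) * t h c := by
    intro g h c
    have h1 : ρP g (h • c) * ρP h c = ρP (g * h) c := by
      refine Subtype.ext ?_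
      simp only [hρP, Subgroup.coe_mul, mul_smul]
      group
    simp only [ht, ← h1, map_mul, mul_smul]
    group
  have hfst : ∀ g h c, (t (g * h) c).1 = (t g (h • c)).1 + A.ρ g ((t h c).1) + f.1 (g, h) := by
    intro g h c
    rw [hcoc g h c, CExt.mul_fst, hsnd, hsnd]
  set x : G → A := fun g => -∑ c : G ⧸ P, (t g c).1 with hx
  have hkey : ∀ g h, A.ρ g (x h) - x (g * h) + x g = f.1 (g, h) := by
    intro g h
    have hsum : ∑ c : G ⧸ P, (t (g * h) c).1
        = ∑ c : G ⧸ P, (t g c).1 + A.ρ g (∑ c : G ⧸ P, (t h c).1)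
          + (Fintype.card (G ⧸ P)) • f.1 (g, h) := by
      rw [Finset.sum_congr rfl (fun c _ => hfst g h c), Finset.sum_add_distrib,
        Finset.sum_add_distrib, map_sum, Finset.sum_const, Finset.card_univ]
      congr 2
      exact Fintype.sum_equiv (MulAction.toPerm h) _ _ (fun c => rfl)
    have hn : (Fintype.card (G ⧸ P)) • f.1 (g, h) = f.1 (g, h) := by
      rw [← Nat.cast_smul_eq_nsmul k, hcard, one_smul]
    rw [hn] at hsum
    simp only [hx, map_neg]
    rw [hsum]
    abel
  exact ⟨x, funext fun gh => hkey gh.1 gh.2⟩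

end Gaschutz

/-- Let `F` be a field of characteristic `2`, let `m ≥ 3`, and let `Q` be a
finite group whose Sylow `2`-subgroup is isomorphic to the semi-dihedral group of order
`2^(m+1)`.  Then for every finite-dimensional `F`-linear representation `M` of `Q`,
`dim_F H^2(Q, M) ≤ 3 · dim_F M`. -/
theorem finrank_groupCohomology_two_le_of_semidihedral_sylow
    (F : Type) [Field F] [CharP F 2]
    (Q : Type) [Group Q] [Fintype Q]
    (m : ℕ) (hm : 3 ≤ m) (P : Sylow 2 Q)
    (hP : Nonempty (↥(P : Subgroup Q) ≃* SemidihedralGroup m))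
    (M : Rep F Q) [FiniteDimensional F M.V] :
    Module.finrank F (groupCohomology M 2) ≤ 3 * Module.finrank F M.V := by
  classical
  obtain ⟨e0⟩ := hP
  let e : ↥(P : Subgroup Q) ≃* PresentedGroup (semidihedralRels m) := e0
  haveI : FiniteDimensional F M := inferInstanceAs (FiniteDimensional F M.V)
  set g₀ : Fin 2 → Q := fun i => ((e.symm (PresentedGroup.of i) : ↥(P : Subgroup Q)) : Q) with hg₀
  set r1 : FreeGroup (Fin 2) := FreeGroup.of 0 ^ 2 with hr1
  set r2 : FreeGroup (Fin 2) := FreeGroup.of 1 ^ (2 ^ m) with hr2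
  set r3 : FreeGroup (Fin 2) := (FreeGroup.of 0)⁻¹ * FreeGroup.of 1 * FreeGroup.of 0 *
      (FreeGroup.of 1 ^ (2 ^ (m - 1) - 1))⁻¹ with hr3
  set Φ : cocycles₂ M →ₗ[F] (M × (M × M) : Type) :=
    LinearMap.prod (relatorEval g₀ r1)
      (LinearMap.prod (relatorEval g₀ r2) (relatorEval g₀ r3)) with hΦ
  -- the image of the relators in Q is trivial
  have hg₀lift : FreeGroup.lift g₀ =
      ((P : Subgroup Q).subtype.comp e.symm.toMonoidHom).comp
        (PresentedGroup.mk (semidihedralRels m)) :=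
    FreeGroup.ext_hom _ _ (fun i => by rw [FreeGroup.lift_apply_of]; rfl)
  have hrelmap : ∀ r ∈ semidihedralRels m, FreeGroup.lift g₀ r = 1 := by
    intro r hr
    have h1 : PresentedGroup.mk (semidihedralRels m) r = 1 :=
      (QuotientGroup.eq_one_iff r).2 (Subgroup.subset_normalClosure hr)
    rw [hg₀lift, MonoidHom.comp_apply, h1, map_one]
  -- the index is odd, hence equals 1 in F
  haveI : Fintype (Q ⧸ (P : Subgroup Q)) := Fintype.ofFinite _
  have hcard : ((Fintype.card (Q ⧸ (P : Subgroup Q)) : F) = 1) := by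
    haveI : Fact (Nat.Prime 2) := ⟨Nat.prime_two⟩
    haveI : (P : Subgroup Q).FiniteIndex := ⟨Subgroup.index_ne_zero_of_finite⟩
    have hodd : ¬ (2 ∣ (P : Subgroup Q).index) := P.not_dvd_index
    have hidx : (P : Subgroup Q).index = Fintype.card (Q ⧸ (P : Subgroup Q)) :=
      Nat.card_eq_fintype_card
    rw [hidx] at hodd
    set n := Fintype.card (Q ⧸ (P : Subgroup Q)) with hn
    have hmod : n % 2 = 1 := Nat.two_dvd_ne_zero.mp hodd
    have : n = 2 * (n / 2) + 1 := by omega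
    rw [this]
    push_cast
    have h2 : ((2 : ℕ) : F) = 0 := CharP.cast_eq_zero F 2
    push_cast at h2
    rw [h2]
    ring
  -- kernel of Φ consists of coboundaries
  have hker : ∀ f : cocycles₂ M, f ∈ LinearMap.ker Φ → f.1 ∈ coboundaries₂ M := by
    intro f hf
    rw [LinearMap.mem_ker, hΦ] at hf
    simp only [LinearMap.prod_apply, Pi.prod, Prod.mk_eq_zero] at hf
    have h1 : relatorEval g₀ r1 f = 0 := congrArg Prod.fst hf
    have h2 : relatorEval g₀ r2 f = 0 := congrArg (fun p => p.2.1) hf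
    have h3 : relatorEval g₀ r3 f = 0 := congrArg (fun p => p.2.2) hf
    have hone : ∀ r ∈ semidihedralRels m, CExt.lifted g₀ f r = 1 := by
      intro r hr
      have hsnd : (CExt.lifted g₀ f r).2 = 1 := by
        rw [CExt.lifted_snd]; exact hrelmap r hr
      have hfst : (CExt.lifted g₀ f r).1 = -f.1 (1, 1) := by
        simp only [semidihedralRels, Set.mem_insert_iff, Set.mem_singleton_iff] at hr
        rcases hr with rfl | rfl | rfl
        · exact eq_neg_of_add_eq_zero_left h1
        · exact eq_neg_of_add_eq_zero_left h2
        · exact eq_neg_of_add_eq_zero_left h3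
      exact CExt.ext (f := f) (by rw [hfst, CExt.one_fst]) (by rw [hsnd, CExt.one_snd])
    set ψ : PresentedGroup (semidihedralRels m) →* CExt M f :=
      PresentedGroup.toGroup hone with hψ
    set s : ↥(P : Subgroup Q) →* CExt M f := ψ.comp e.toMonoidHom with hsdef
    have hs : ∀ p : ↥(P : Subgroup Q), (s p).2 = (p : Q) := by
      have hcomp : (CExt.π f).comp ψ =
          (P : Subgroup Q).subtype.comp e.symm.toMonoidHom := by
        apply PresentedGroup.ext
        intro i
        rw [MonoidHom.comp_apply, hψ]
        exact (congrArg (CExt.π f) (PresentedGroup.toGroup.of (h := hone) (x := i))).trans rfl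
      intro p
      have h := DFunLike.congr_fun hcomp (e p)
      rw [MonoidHom.comp_apply, MonoidHom.comp_apply] at h
      simp only [MulEquiv.coe_toMonoidHom, MulEquiv.symm_apply_apply] at h
      exact h
    exact mem_twoCoboundaries_of_monoidHom_section hcard f s hs
  -- dimension count
  haveI : FiniteDimensional F (cocycles₂ M ⧸ LinearMap.ker Φ) :=
    LinearEquiv.finiteDimensional (Φ.quotKerEquivRange).symm
  set q : (cocycles₂ M ⧸ LinearMap.ker Φ) →ₗ[F] H2 M :=
    Submodule.liftQ _ (H2π M).hom (fun z hz => (H2π_eq_zero_iff z).2 (hker z hz)) with hqdef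
  have hq : Function.Surjective q := by
    intro y
    obtain ⟨z, rfl⟩ := (ModuleCat.epi_iff_surjective (H2π M)).1 inferInstance y
    exact ⟨Submodule.mkQ _ z, by rw [hqdef]; exact Submodule.liftQ_apply _ _ _⟩
  have hle1 : Module.finrank F (H2 M) ≤
      Module.finrank F (cocycles₂ M ⧸ LinearMap.ker Φ) := by
    have h := LinearMap.finrank_range_le q
    rw [LinearMap.range_eq_top.2 hq] at h
    simpa [finrank_top] using h
  refine hle1.trans ?_
  rw [LinearEquiv.finrank_eq (Φ.quotKerEquivRange)]
  refine (Submodule.finrank_le _).trans ?_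
  rw [Module.finrank_prod, Module.finrank_prod]
  show Module.finrank F M.V + (Module.finrank F M.V + Module.finrank F M.V)
      ≤ 3 * Module.finrank F M.V
  ring_nf
  omega
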